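/- Let m ≥ 1 and let T(t,m) be the exponential tree whose seed T(0,m) is a single edge on two vertices. Then for every t ≥ 1, the geodesic distance (Wiener index) of T(t,m) equals (m+1)^{t−1}·(2 + (4mt + m − 1)(m+1)^t). -/

import Mathlib

/-- A finite simple graph, bundled with its (finite) vertex type. -/
structure FinSimpleGraph where
  V : Type
  fV : Fintype V
  G : SimpleGraph V

attribute [instance] FinSimpleGraph.fV

/-- The geodesic distance (Wiener index) of a finite simple graph: the sum of the graph
distances over all unordered pairs of distinct vertices. -/
noncomputable def wienerIndex {V : Type} [Fintype V] (G : SimpleGraph V) : ℕ :=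
  (∑ u : V, ∑ v : V, G.dist u v) / 2

/-- One step of the exponential-tree construction: attach `m` new leaf vertices to every
vertex.  The new vertex set is `V ⊕ (V × Fin m)`, where `(v, j)` is adjacent exactly to
`v`, and the adjacency on the `V` component is unchanged. -/
def expTreeStep (m : ℕ) (X : FinSimpleGraph) : FinSimpleGraph :=
  { V := X.V ⊕ (X.V × Fin m), fV := inferInstance,
    G := SimpleGraph.fromRel fun a b =>
      match a, b with
      | Sum.inl u, Sum.inl v => X.G.Adj u v
      | Sum.inl u, Sum.inr (v, _) => u = v
      | _, _ => False }

/-- The exponential tree `T(t,m)` obtained from the seed after `t` steps. -/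
def expTreeIter (m : ℕ) (X : FinSimpleGraph) : ℕ → FinSimpleGraph
  | 0 => X
  | t + 1 => expTreeStep m (expTreeIter m X t)

namespace ExpAux

variable {m : ℕ} {X : FinSimpleGraph}

def r (a : X.V ⊕ (X.V × Fin m)) : X.V := Sum.elim id Prod.fst a

def ε (a : X.V ⊕ (X.V × Fin m)) : ℕ := Sum.elim (fun _ => 0) (fun _ => 1) a

lemma adj_inl_inl {u v : X.V} :
    (expTreeStep m X).G.Adj (Sum.inl u) (Sum.inl v) ↔ X.G.Adj u v := by
  simp only [expTreeStep, SimpleGraph.fromRel_adj]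
  constructor
  · rintro ⟨h, h1 | h1⟩
    · exact h1
    · exact h1.symm
  · intro h
    exact ⟨by simp [h.ne], Or.inl h⟩

lemma adj_inl_inr {u v : X.V} {j : Fin m} :
    (expTreeStep m X).G.Adj (Sum.inl u) (Sum.inr (v, j)) ↔ u = v := by
  simp only [expTreeStep, SimpleGraph.fromRel_adj]
  constructor
  · rintro ⟨h, h1 | h1⟩
    · exact h1
    · exact h1.elim
  · rintro rfl
    exact ⟨by simp, Or.inl rfl⟩

lemma adj_inr_inr {p q : X.V × Fin m} :
    ¬ (expTreeStep m X).G.Adj (Sum.inr p) (Sum.inr q) := by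
  rintro ⟨h, h1 | h1⟩ <;> exact h1.elim

/-- homomorphism embedding the old graph. -/
def homInl : X.G →g (expTreeStep m X).G where
  toFun := Sum.inl
  map_rel' := fun h => adj_inl_inl.mpr h

/-- walk from a vertex to its root. -/
def toRoot (a : X.V ⊕ (X.V × Fin m)) :
    (expTreeStep m X).G.Walk a (Sum.inl (r a)) :=
  match a with
  | Sum.inl _ => SimpleGraph.Walk.nil
  | Sum.inr (u, j) =>
      SimpleGraph.Walk.cons ((adj_inl_inr (u := u) (v := u) (j := j)).mpr rfl).symm
        SimpleGraph.Walk.nil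

lemma length_toRoot (a : X.V ⊕ (X.V × Fin m)) : (toRoot a).length = ε a := by
  match a with
  | Sum.inl u => rfl
  | Sum.inr (u, j) => rfl

lemma exists_walk (hX : X.G.Connected) (a b : X.V ⊕ (X.V × Fin m)) :
    ∃ p : (expTreeStep m X).G.Walk a b,
      p.length = X.G.dist (r a) (r b) + ε a + ε b := by
  obtain ⟨w, hw⟩ := (hX (r a) (r b)).exists_walk_length_eq_dist
  refine ⟨(toRoot a).append ((w.map homInl).append (toRoot b).reverse), ?_⟩
  have key : ∀ {W : Type} {G : SimpleGraph W} {x y z w' : W} (p1 : G.Walk x y) (p2 : G.Walk y z)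
      (p3 : G.Walk w' z), (p1.append (p2.append p3.reverse)).length
        = p1.length + p2.length + p3.length := by
    intros; simp [SimpleGraph.Walk.length_append]; omega
  exact (key (toRoot a) (w.map homInl) (toRoot b)).trans
    ((congrArg₂ (· + ·) (congrArg₂ (· + ·) (length_toRoot a)
      ((SimpleGraph.Walk.length_map homInl w).trans hw)) (length_toRoot b)).trans (by omega))

lemma step_connected (hX : X.G.Connected) : (expTreeStep m X).G.Connected := by
  have hne : Nonempty X.V := hX.nonempty
  rw [SimpleGraph.connected_iff]
  refine ⟨fun a b => ?_, ⟨Sum.inl (Classical.arbitrary X.V)⟩⟩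
  obtain ⟨p, -⟩ := exists_walk hX a b
  exact ⟨p⟩

open Classical in
/-- candidate distance function. -/
noncomputable def f (a b : X.V ⊕ (X.V × Fin m)) : ℕ :=
  if a = b then 0 else X.G.dist (r a) (r b) + ε a + ε b

lemma f_self (a : X.V ⊕ (X.V × Fin m)) : f a a = 0 := if_pos rfl

lemma f_step (hX : X.G.Connected) {a c : X.V ⊕ (X.V × Fin m)}
    (h : (expTreeStep m X).G.Adj a c) (b : X.V ⊕ (X.V × Fin m)) :
    f a b ≤ 1 + f c b := by
  classical
  by_cases hab : a = b
  · simp [f, hab]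
  by_cases hcb : c = b
  · subst hcb
    rw [f, if_neg hab, f_self]
    match a, c, h with
    | Sum.inl u, Sum.inl v, h =>
        have h2 : X.G.dist u v = 1 :=
          SimpleGraph.dist_eq_one_iff_adj.mpr (adj_inl_inl.mp h)
        show X.G.dist u v + 0 + 0 ≤ 1 + 0
        omega
    | Sum.inl u, Sum.inr (v, j), h =>
        have : u = v := adj_inl_inr.mp h
        subst this
        simp only [r, ε, Sum.elim_inl, Sum.elim_inr, id_eq, SimpleGraph.dist_self]
        omega
    | Sum.inr (u, i), Sum.inl v, h =>
        have : v = u := adj_inl_inr.mp h.symm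
        subst this
        simp only [r, ε, Sum.elim_inl, Sum.elim_inr, id_eq, SimpleGraph.dist_self]
        omega
    | Sum.inr p, Sum.inr q, h => exact absurd h adj_inr_inr
  · rw [f, if_neg hab, f, if_neg hcb]
    match a, c, h with
    | Sum.inl u, Sum.inl v, h =>
        have h2 : X.G.dist u v = 1 :=
          SimpleGraph.dist_eq_one_iff_adj.mpr (adj_inl_inl.mp h)
        have h1 : X.G.dist u (r b) ≤ X.G.dist u v + X.G.dist v (r b) :=
          hX.dist_triangle
        show X.G.dist u (r b) + 0 + ε b ≤ 1 + (X.G.dist v (r b) + 0 + ε b)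
        omega
    | Sum.inl u, Sum.inr (v, j), h =>
        have : u = v := adj_inl_inr.mp h
        subst this
        show X.G.dist u (r b) + 0 + ε b ≤ 1 + (X.G.dist u (r b) + 1 + ε b)
        omega
    | Sum.inr (u, i), Sum.inl v, h =>
        have : v = u := adj_inl_inr.mp h.symm
        subst this
        simp only [r, ε, Sum.elim_inl, Sum.elim_inr, id_eq]
        omega
    | Sum.inr p, Sum.inr q, h => exact absurd h adj_inr_inr

lemma f_le_length (hX : X.G.Connected) {a b : X.V ⊕ (X.V × Fin m)}
    (p : (expTreeStep m X).G.Walk a b) : f a b ≤ p.length := by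
  induction p with
  | nil => simp [f]
  | cons h q ih =>
      calc f _ _ ≤ 1 + f _ _ := f_step hX h _
        _ ≤ 1 + q.length := by exact Nat.add_le_add_left ih 1
        _ = _ := by exact (Nat.add_comm 1 q.length).trans (SimpleGraph.Walk.length_cons h q).symm

lemma dist_step (hX : X.G.Connected) {a b : X.V ⊕ (X.V × Fin m)} (hab : a ≠ b) :
    (expTreeStep m X).G.dist a b = X.G.dist (r a) (r b) + ε a + ε b := by
  classical
  obtain ⟨p, hp⟩ := exists_walk hX a b
  refine le_antisymm (hp ▸ SimpleGraph.dist_le p) ?_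
  obtain ⟨q, hq⟩ := ((step_connected hX) a b).exists_walk_length_eq_dist
  have := f_le_length hX q
  rw [hq] at this
  simpa [f, hab] using this

open Classical in
lemma dist_step' (hX : X.G.Connected) (a b : X.V ⊕ (X.V × Fin m)) :
    (expTreeStep m X).G.dist a b
      = X.G.dist (r a) (r b) + (if a = b then 0 else ε a + ε b) := by
  classical
  by_cases hab : a = b
  · subst hab; simp [SimpleGraph.dist_self]; exact SimpleGraph.dist_self
  · rw [dist_step hX hab, if_neg hab]; ring

lemma sum_comp_r (g : X.V → ℕ) :
    ∑ a : X.V ⊕ (X.V × Fin m), g (r a) = (m + 1) * ∑ u : X.V, g u := by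
  rw [Fintype.sum_sum_type]
  simp only [r, Sum.elim_inl, Sum.elim_inr, id_eq]
  rw [Fintype.sum_prod_type]
  simp only [Finset.sum_const, Finset.card_univ, Fintype.card_fin, smul_eq_mul]
  rw [← Finset.mul_sum]
  ring

lemma sum_eps : ∑ a : X.V ⊕ (X.V × Fin m), ε a = m * Fintype.card X.V := by
  rw [Fintype.sum_sum_type]
  simp [ε, Finset.sum_const, mul_comm]

lemma card_step : Fintype.card ((expTreeStep m X).V) = (m + 1) * Fintype.card X.V := by
  simp [expTreeStep, Fintype.card_sum, Fintype.card_prod]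
  erw [Fintype.card_sum, Fintype.card_prod, Fintype.card_fin]
  ring

lemma sum_dist_step (hX : X.G.Connected) :
    (∑ a : (expTreeStep m X).V, ∑ b : (expTreeStep m X).V, (expTreeStep m X).G.dist a b)
        + 2 * (m * Fintype.card X.V)
      = (m + 1) ^ 2 * (∑ u : X.V, ∑ v : X.V, X.G.dist u v)
        + 2 * ((m + 1) * Fintype.card X.V) * (m * Fintype.card X.V) := by
  classical
  show (∑ a : X.V ⊕ (X.V × Fin m), ∑ b : X.V ⊕ (X.V × Fin m), (expTreeStep m X).G.dist a b)
        + 2 * (m * Fintype.card X.V)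
      = (m + 1) ^ 2 * (∑ u : X.V, ∑ v : X.V, X.G.dist u v)
        + 2 * ((m + 1) * Fintype.card X.V) * (m * Fintype.card X.V)
  have key : ∀ a b : X.V ⊕ (X.V × Fin m),
      (expTreeStep m X).G.dist a b
        = X.G.dist (r a) (r b) + (if a = b then 0 else ε a + ε b) :=
    dist_step' hX
  -- split the double sum
  have hsplit :
      (∑ a : X.V ⊕ (X.V × Fin m), ∑ b : X.V ⊕ (X.V × Fin m), (expTreeStep m X).G.dist a b)
        = (∑ a : X.V ⊕ (X.V × Fin m), ∑ b : X.V ⊕ (X.V × Fin m), X.G.dist (r a) (r b))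
          + ∑ a : X.V ⊕ (X.V × Fin m), ∑ b : X.V ⊕ (X.V × Fin m),
              (if a = b then 0 else ε a + ε b) := by
    rw [← Finset.sum_add_distrib]
    refine Finset.sum_congr rfl fun a _ => ?_
    rw [← Finset.sum_add_distrib]
    exact Finset.sum_congr rfl fun b _ => key a b
  have h1 : (∑ a : X.V ⊕ (X.V × Fin m), ∑ b : X.V ⊕ (X.V × Fin m), X.G.dist (r a) (r b))
      = (m + 1) ^ 2 * ∑ u : X.V, ∑ v : X.V, X.G.dist u v := by
    rw [show (∑ a : X.V ⊕ (X.V × Fin m), ∑ b : X.V ⊕ (X.V × Fin m), X.G.dist (r a) (r b))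
        = ∑ a : X.V ⊕ (X.V × Fin m), (m + 1) * ∑ v : X.V, X.G.dist (r a) v from
      Finset.sum_congr rfl fun a _ => sum_comp_r (fun v => X.G.dist (r a) v)]
    rw [← Finset.mul_sum, sum_comp_r (fun u => ∑ v : X.V, X.G.dist u v)]
    ring
  have h2 : (∑ a : X.V ⊕ (X.V × Fin m), ∑ b : X.V ⊕ (X.V × Fin m),
        (if a = b then 0 else ε a + ε b)) + 2 * (m * Fintype.card X.V)
      = 2 * ((m + 1) * Fintype.card X.V) * (m * Fintype.card X.V) := by
    have hpt : ∀ a : X.V ⊕ (X.V × Fin m),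
        (∑ b : X.V ⊕ (X.V × Fin m), (if a = b then 0 else ε a + ε b)) + 2 * ε a
          = ∑ b : X.V ⊕ (X.V × Fin m), (ε a + ε b) := by
      intro a
      have hdiag : (∑ b : X.V ⊕ (X.V × Fin m), if a = b then ε a + ε b else 0)
          = 2 * ε a := by
        rw [Finset.sum_ite_eq]
        simp [two_mul]
      rw [← hdiag, ← Finset.sum_add_distrib]
      refine Finset.sum_congr rfl fun b _ => ?_
      split <;> simp
    have hfull : ∑ a : X.V ⊕ (X.V × Fin m), ∑ b : X.V ⊕ (X.V × Fin m), (ε a + ε b)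
        = 2 * ((m + 1) * Fintype.card X.V) * (m * Fintype.card X.V) := by
      have hcard : Fintype.card (X.V ⊕ (X.V × Fin m)) = (m + 1) * Fintype.card X.V := by
        simp [Fintype.card_sum, Fintype.card_prod]
        ring
      simp only [Finset.sum_add_distrib, Finset.sum_const, Finset.card_univ, smul_eq_mul,
        sum_eps, ← Finset.sum_mul, ← Finset.mul_sum]
      rw [hcard]
      ring
    calc (∑ a : X.V ⊕ (X.V × Fin m), ∑ b : X.V ⊕ (X.V × Fin m),
            (if a = b then 0 else ε a + ε b)) + 2 * (m * Fintype.card X.V)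
        = ∑ a : X.V ⊕ (X.V × Fin m),
            ((∑ b : X.V ⊕ (X.V × Fin m), (if a = b then 0 else ε a + ε b)) + 2 * ε a) := by
          rw [Finset.sum_add_distrib, ← Finset.mul_sum, sum_eps]
      _ = ∑ a : X.V ⊕ (X.V × Fin m), ∑ b : X.V ⊕ (X.V × Fin m), (ε a + ε b) :=
          Finset.sum_congr rfl fun a _ => hpt a
      _ = _ := hfull
  rw [hsplit]
  omega

end ExpAux

section Main

abbrev seedG : FinSimpleGraph := ⟨Fin 2, inferInstance, SimpleGraph.pathGraph 2⟩

noncomputable def A (m t : ℕ) : ℕ :=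
  ∑ a : (expTreeIter m seedG t).V, ∑ b : (expTreeIter m seedG t).V,
    (expTreeIter m seedG t).G.dist a b

lemma conn_iter (m t : ℕ) : (expTreeIter m seedG t).G.Connected := by
  induction t with
  | zero => exact SimpleGraph.pathGraph_connected 1
  | succ t ih => exact ExpAux.step_connected ih

lemma card_iter (m t : ℕ) : Fintype.card (expTreeIter m seedG t).V = 2 * (m + 1) ^ t := by
  induction t with
  | zero => simp [expTreeIter, seedG]; exact Fintype.card_fin 2
  | succ t ih =>
      show Fintype.card (expTreeStep m (expTreeIter m seedG t)).V = _
      rw [ExpAux.card_step, ih]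
      ring

lemma A_zero (m : ℕ) : A m 0 = 2 := by
  show (∑ a : Fin 2, ∑ b : Fin 2, (SimpleGraph.pathGraph 2).dist a b) = 2
  have h01 : (SimpleGraph.pathGraph 2).dist 0 1 = 1 :=
    SimpleGraph.dist_eq_one_iff_adj.mpr (by simp [SimpleGraph.pathGraph_adj])
  have h10 : (SimpleGraph.pathGraph 2).dist 1 0 = 1 :=
    SimpleGraph.dist_eq_one_iff_adj.mpr (by simp [SimpleGraph.pathGraph_adj])
  rw [Fin.sum_univ_two, Fin.sum_univ_two, Fin.sum_univ_two]
  simp [h01, h10, SimpleGraph.dist_self]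

lemma A_rec (m t : ℕ) :
    A m (t + 1) + 2 * (m * (2 * (m + 1) ^ t))
      = (m + 1) ^ 2 * A m t
        + 2 * ((m + 1) * (2 * (m + 1) ^ t)) * (m * (2 * (m + 1) ^ t)) := by
  have := ExpAux.sum_dist_step (m := m) (X := expTreeIter m seedG t) (conn_iter m t)
  rw [card_iter] at this
  exact this

lemma A_closed (k s : ℕ) :
    A (k + 1) (s + 1) = 2 * ((k + 2) ^ s * (2 + (4 * (k + 1) * (s + 1) + k) * (k + 2) ^ (s + 1))) := by
  induction s with
  | zero =>
      have h := A_rec (k + 1) 0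
      rw [A_zero] at h
      have : 2 * ((k + 2) ^ 0 * (2 + (4 * (k + 1) * (0 + 1) + k) * (k + 2) ^ (0 + 1)))
          + 2 * ((k + 1) * (2 * (k + 1 + 1) ^ 0))
          = (k + 1 + 1) ^ 2 * 2
            + 2 * ((k + 1 + 1) * (2 * (k + 1 + 1) ^ 0)) * ((k + 1) * (2 * (k + 1 + 1) ^ 0)) := by
        ring
      omega
  | succ s ih =>
      have h := A_rec (k + 1) (s + 1)
      rw [ih] at h
      have key : 2 * ((k + 2) ^ (s + 1) * (2 + (4 * (k + 1) * (s + 1 + 1) + k) * (k + 2) ^ (s + 1 + 1)))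
          + 2 * ((k + 1) * (2 * (k + 1 + 1) ^ (s + 1)))
          = (k + 1 + 1) ^ 2 * (2 * ((k + 2) ^ s * (2 + (4 * (k + 1) * (s + 1) + k) * (k + 2) ^ (s + 1))))
            + 2 * ((k + 1 + 1) * (2 * (k + 1 + 1) ^ (s + 1))) * ((k + 1) * (2 * (k + 1 + 1) ^ (s + 1))) := by
        ring
      omega

end Main

/-- For `m ≥ 1` and the exponential tree `T(t,m)` whose seed is a single edge on two
vertices, the Wiener index of `T(t,m)` for `t ≥ 1` equals
`(m+1)^{t−1}·(2 + (4mt + m − 1)(m+1)^t)`. -/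
theorem wiener_expTree_edge (m t : ℕ) (hm : 1 ≤ m) (ht : 1 ≤ t) :
    wienerIndex (expTreeIter m ⟨Fin 2, inferInstance, SimpleGraph.pathGraph 2⟩ t).G =
      (m + 1) ^ (t - 1) * (2 + (4 * m * t + m - 1) * (m + 1) ^ t) := by
  obtain ⟨k, rfl⟩ : ∃ k, m = k + 1 := ⟨m - 1, by omega⟩
  obtain ⟨s, rfl⟩ : ∃ s, t = s + 1 := ⟨t - 1, by omega⟩
  have hA : A (k + 1) (s + 1)
      = 2 * ((k + 2) ^ s * (2 + (4 * (k + 1) * (s + 1) + k) * (k + 2) ^ (s + 1))) :=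
    A_closed k s
  show wienerIndex (expTreeIter (k + 1) seedG (s + 1)).G = _
  unfold wienerIndex
  have : (∑ u : (expTreeIter (k + 1) seedG (s + 1)).V,
      ∑ v : (expTreeIter (k + 1) seedG (s + 1)).V,
        (expTreeIter (k + 1) seedG (s + 1)).G.dist u v) = A (k + 1) (s + 1) := rfl
  rw [this, hA, Nat.mul_div_cancel_left _ (by norm_num : 0 < 2)]
  have h1 : 4 * (k + 1) * (s + 1) + (k + 1) - 1 = 4 * (k + 1) * (s + 1) + k := by omega
  have h2 : s + 1 - 1 = s := rfl
  rw [h1, h2]
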